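/- For every cardinal κ: κ < add(𝔇fin, 𝔇) if and only if for every κ-sequence ⟨(g_α, U_α) : α < κ⟩ with each U_α a nonprincipal ultrafilter on ℕ and each g_α ∈ ℕ^ℕ, there exists g ∈ ℕ^ℕ such that for each α, {n : g_α(n) ≤ g(n)} ∈ U_α. -/

import Mathlib

open Cardinal Set

/-- `A` is almost contained in `B`: `A \ B` is finite. -/
def ASub (A B : Set ℕ) : Prop := (A \ B).Finite

/-- A family is linearly quasiordered by `⊆*`. -/
def LinQO (F : Set (Set ℕ)) : Prop := ∀ A ∈ F, ∀ B ∈ F, ASub A B ∨ ASub B A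

/-- A centered family of infinite subsets of `ℕ`. -/
def Centered (F : Set (Set ℕ)) : Prop :=
  (∀ A ∈ F, A.Infinite) ∧
  ∀ G : Finset (Set ℕ), ↑G ⊆ F → G.Nonempty → (⋂ A ∈ G, A).Infinite

/-- `A` is a pseudo-intersection of `F`. -/
def PseudoInt (F : Set (Set ℕ)) (A : Set ℕ) : Prop :=
  A.Infinite ∧ ∀ B ∈ F, ASub A B

/-- The pseudo-intersection number 𝔭. -/
noncomputable def pNum : Cardinal :=
  sInf {c | ∃ F : Set (Set ℕ), Centered F ∧ (¬∃ A, PseudoInt F A) ∧ c = #F}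

/-- The tower number 𝔱. -/
noncomputable def tNum : Cardinal :=
  sInf {c | ∃ F : Set (Set ℕ), (∀ A ∈ F, A.Infinite) ∧ LinQO F ∧
    (¬∃ A, PseudoInt F A) ∧ c = #F}

/-- Eventual dominance `f ≤* g`. -/
def LeStar (f g : ℕ → ℕ) : Prop := {n | g n < f n}.Finite

def UnboundedFam (B : Set (ℕ → ℕ)) : Prop := ¬∃ g, ∀ f ∈ B, LeStar f g

def DominatingFam (D : Set (ℕ → ℕ)) : Prop := ∀ f, ∃ g ∈ D, LeStar f g

/-- The unbounding number 𝔟. -/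
noncomputable def bNum : Cardinal := sInf {c | ∃ B, UnboundedFam B ∧ c = #B}

/-- The dominating number 𝔡. -/
noncomputable def dNum : Cardinal := sInf {c | ∃ D, DominatingFam D ∧ c = #D}

def SplittingFam (S : Set (Set ℕ)) : Prop :=
  ∀ A : Set ℕ, A.Infinite → ∃ s ∈ S, (A ∩ s).Infinite ∧ (A \ s).Infinite

/-- The splitting number 𝔰. -/
noncomputable def sNum : Cardinal := sInf {c | ∃ S, SplittingFam S ∧ c = #S}

/-- `g` avoids middles in `X` with respect to `⟨R,S⟩`. -/
def AvoidsMiddles (R S : ℕ → ℕ → Prop) (g : ℕ → ℕ) (X : Set (ℕ → ℕ)) : Prop :=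
  (∀ f ∈ X, {n | R (f n) (g n)}.Infinite) ∧
  ∀ f ∈ X, ∀ h ∈ X,
    {n | R (f n) (g n) ∧ S (g n) (h n)}.Finite ∨
    {n | R (h n) (g n) ∧ S (g n) (f n)}.Finite

/-- The excluded middle property with respect to `⟨R,S⟩`. -/
def EMP (R S : ℕ → ℕ → Prop) (X : Set (ℕ → ℕ)) : Prop := ∃ g, AvoidsMiddles R S g X

/-- The cardinal 𝔵_{R,S}. -/
noncomputable def xNum (R S : ℕ → ℕ → Prop) : Cardinal :=
  sInf {c | ∃ X : Set (ℕ → ℕ), ¬ EMP R S X ∧ c = #X}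

/-- The class 𝔅 of bounded sets. -/
def ClB (Y : Set (ℕ → ℕ)) : Prop := ∃ g, ∀ f ∈ Y, LeStar f g

/-- The class 𝔛. -/
def ClX (Y : Set (ℕ → ℕ)) : Prop := EMP (· < ·) (· ≤ ·) Y

/-- `Y` is finitely dominating: `maxfin Y` is dominating. -/
def FinDominating (Y : Set (ℕ → ℕ)) : Prop :=
  ∀ f : ℕ → ℕ, ∃ F : Finset (ℕ → ℕ), ↑F ⊆ Y ∧ LeStar f (fun n => F.sup (fun h => h n))

/-- The class 𝔇fin of non finitely-dominating sets. -/
def ClDfin (Y : Set (ℕ → ℕ)) : Prop := ¬ FinDominating Y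

/-- The class 𝔇 of non-dominating sets. -/
def ClD (Y : Set (ℕ → ℕ)) : Prop := ¬ DominatingFam Y

/-- The additivity number add(I, J). -/
noncomputable def addNum (I J : Set (ℕ → ℕ) → Prop) : Cardinal :=
  sInf {c | ∃ Fam : Set (Set (ℕ → ℕ)), (∀ Y ∈ Fam, I Y) ∧ ¬ J (⋃₀ Fam) ∧ c = #Fam}

/-- The Boolean subalgebra of `P(ℕ)` generated by `F`. -/
def genBA (F : Set (Set ℕ)) : Set (Set ℕ) :=
  ⋂₀ {C | F ⊆ C ∧ Set.univ ∈ C ∧ (∀ A ∈ C, Aᶜ ∈ C) ∧ ∀ A ∈ C, ∀ B ∈ C, A ∩ B ∈ C}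

/-- A nonprincipal ultrafilter (every member is infinite). -/
def NonPrincipal (U : Ultrafilter ℕ) : Prop := ∀ S ∈ U, Set.Infinite S

/-- The cofinality of the reduced product `ℕ^ℕ/U`. -/
noncomputable def cofRP (U : Ultrafilter ℕ) : Cardinal :=
  sInf {c | ∃ C : Set (ℕ → ℕ), (∀ f : ℕ → ℕ, ∃ g ∈ C, {n | f n ≤ g n} ∈ U) ∧ c = #C}


/-- Hard direction of the ultrafilter characterization of 𝔇fin. -/
theorem hardDfin {Y : Set (ℕ → ℕ)} (hY : ClDfin Y) :
    ∃ (U : Ultrafilter ℕ) (g0 : ℕ → ℕ), NonPrincipal U ∧ ∀ f ∈ Y, {n | f n ≤ g0 n} ∈ U := by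
  unfold ClDfin FinDominating at hY
  push_neg at hY
  obtain ⟨h, hh⟩ := hY
  classical
  set 𝒮 : Set (Set ℕ) :=
    {A | ∃ F : Finset (ℕ → ℕ), ↑F ⊆ Y ∧ A = {n | F.sup (fun f => f n) < h n}} with h𝒮
  have key : ∀ T : Set (Set ℕ), T.Finite → T ⊆ 𝒮 →
      ∃ F : Finset (ℕ → ℕ), ↑F ⊆ Y ∧ {n | F.sup (fun f => f n) < h n} ⊆ ⋂₀ T := by
    intro T hTfin
    refine Set.Finite.induction_on (motive := fun T _ => T ⊆ 𝒮 →
        ∃ F : Finset (ℕ → ℕ), ↑F ⊆ Y ∧ {n | F.sup (fun f => f n) < h n} ⊆ ⋂₀ T) T hTfin ?_ ?_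
    · intro _
      exact ⟨∅, by simp⟩
    · intro A T _ _ ih hsub
      obtain ⟨F, hFY, hF⟩ := ih (fun x hx => hsub (Set.mem_insert_of_mem _ hx))
      obtain ⟨G, hGY, hG⟩ := hsub (Set.mem_insert _ _)
      refine ⟨F ∪ G, ?_, ?_⟩
      · rw [Finset.coe_union]
        exact Set.union_subset hFY hGY
      · intro n hn
        simp only [Set.mem_setOf_eq] at hn
        rw [Set.sInter_insert]
        refine ⟨?_, hF ?_⟩
        · rw [hG]
          exact lt_of_le_of_lt (Finset.sup_mono Finset.subset_union_right) hn
        · exact lt_of_le_of_lt (Finset.sup_mono Finset.subset_union_left) hn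
  set l : Filter ℕ := Filter.cofinite ⊓ Filter.generate 𝒮 with hl
  have hne : l.NeBot := by
    rw [Filter.neBot_iff]
    intro hbot
    have h0 : (∅ : Set ℕ) ∈ l := by rw [hbot]; exact Filter.mem_bot
    rw [Filter.mem_inf_iff] at h0
    obtain ⟨t, ht, u, hu, htu⟩ := h0
    rw [Filter.mem_generate_iff] at hu
    obtain ⟨T, hT𝒮, hTfin, hTu⟩ := hu
    obtain ⟨F, hFY, hF⟩ := key T hTfin hT𝒮
    have hinf : {n | F.sup (fun f => f n) < h n}.Infinite := hh F hFY
    have hsubc : {n | F.sup (fun f => f n) < h n} ⊆ tᶜ := by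
      intro n hn hnt
      have : n ∈ t ∩ u := ⟨hnt, hTu (hF hn)⟩
      rw [← htu] at this
      exact this
    rw [Filter.mem_cofinite] at ht
    exact hinf (ht.subset hsubc)
  haveI := hne
  refine ⟨Ultrafilter.of l, h, ?_, ?_⟩
  · intro S hS
    by_contra hfin
    rw [Set.not_infinite] at hfin
    have hcompl : Sᶜ ∈ Ultrafilter.of l := by
      refine Ultrafilter.of_le l (Filter.mem_inf_of_left ?_)
      rw [Filter.mem_cofinite, compl_compl]
      exact hfin
    rw [Ultrafilter.compl_mem_iff_notMem] at hcompl
    exact hcompl hS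
  · intro f hf
    have hA : {n | f n < h n} ∈ Filter.generate 𝒮 := by
      apply Filter.mem_generate_of_mem
      exact ⟨{f}, by simpa using hf, by simp⟩
    have hmem : {n | f n < h n} ∈ Ultrafilter.of l :=
      Ultrafilter.of_le l (Filter.mem_inf_of_right hA)
    refine Filter.mem_of_superset hmem ?_
    intro n hn
    simp only [Set.mem_setOf_eq] at hn ⊢
    exact le_of_lt hn

/-- Easy direction of the ultrafilter characterization of 𝔇fin. -/
theorem easyDfin {Y : Set (ℕ → ℕ)} (U : Ultrafilter ℕ) (g0 : ℕ → ℕ)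
    (hU : NonPrincipal U) (hY : ∀ f ∈ Y, {n | f n ≤ g0 n} ∈ U) : ClDfin Y := by
  intro hdom
  obtain ⟨F, hFY, hF⟩ := hdom (fun n => g0 n + 1)
  have hmem : {n | F.sup (fun f => f n) ≤ g0 n} ∈ U := by
    have hbi : (⋂ f ∈ F, {n | f n ≤ g0 n}) ∈ U :=
      (Filter.biInter_finset_mem F).mpr (fun f hf => hY f (hFY hf))
    refine Filter.mem_of_superset hbi ?_
    intro n hn
    simp only [Set.mem_iInter, Set.mem_setOf_eq] at hn ⊢
    exact Finset.sup_le fun f hf => hn f hf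
  have hinf := hU _ hmem
  apply hinf
  refine hF.subset ?_
  intro n hn
  exact Nat.lt_succ_of_le hn

theorem addNum_set_nonempty :
    {c | ∃ Fam : Set (Set (ℕ → ℕ)), (∀ Y ∈ Fam, ClDfin Y) ∧ ¬ ClD (⋃₀ Fam) ∧ c = #Fam}.Nonempty := by
  refine ⟨_, {Fm | ∃ f : ℕ → ℕ, Fm = {f}}, ?_, ?_, rfl⟩
  · rintro Y ⟨f, rfl⟩
    intro hdom
    obtain ⟨F, hFY, hF⟩ := hdom (fun n => f n + 1)
    have huniv : (Set.univ : Set ℕ) ⊆ {n | F.sup (fun q => q n) < f n + 1} := by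
      intro n _
      simp only [Set.mem_setOf_eq]
      have : F.sup (fun q => q n) ≤ f n := by
        refine Finset.sup_le fun q hq => ?_
        have hq' : q = f := hFY hq
        exact le_of_eq (congrFun hq' n)
      exact Nat.lt_succ_of_le this
    exact Set.infinite_univ (hF.subset huniv)
  · intro hc
    apply hc
    intro f
    refine ⟨f, ⟨{f}, ⟨f, rfl⟩, rfl⟩, ?_⟩
    have : {n | f n < f n} = (∅ : Set ℕ) := by
      ext n; simp
    unfold LeStar
    rw [this]
    exact Set.finite_empty

theorem stmt13 (κ : Cardinal) :
    κ < addNum ClDfin ClD ↔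
    ∀ (ι : Type) (_ : #ι = κ) (g : ι → ℕ → ℕ) (U : ι → Ultrafilter ℕ),
      (∀ i, NonPrincipal (U i)) →
      ∃ g' : ℕ → ℕ, ∀ i, {n | g i n ≤ g' n} ∈ U i := by
  constructor
  · intro hκ ι hι g U hU
    set Yf : ι → Set (ℕ → ℕ) := fun i => {f | {n | f n ≤ g i n} ∈ U i} with hYf
    have hclD : ClD (⋃₀ Set.range Yf) := by
      intro hdom
      have hmem : #(Set.range Yf) ∈
          {c | ∃ Fam : Set (Set (ℕ → ℕ)), (∀ Y ∈ Fam, ClDfin Y) ∧ ¬ ClD (⋃₀ Fam) ∧ c = #Fam} := by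
        refine ⟨Set.range Yf, ?_, fun hc => hc hdom, rfl⟩
        rintro Z ⟨i, rfl⟩
        exact easyDfin (U i) (g i) (hU i) (fun f hf => hf)
      have h1 : addNum ClDfin ClD ≤ #(Set.range Yf) := csInf_le' hmem
      have h2 : #(Set.range Yf) ≤ κ := hι ▸ Cardinal.mk_range_le
      exact absurd hκ (not_lt.mpr (h1.trans h2))
    rw [ClD, DominatingFam] at hclD
    push_neg at hclD
    obtain ⟨f, hf⟩ := hclD
    refine ⟨f, fun i => ?_⟩
    by_contra hmem
    have hfY : {n | f n ≤ g i n} ∈ U i := by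
      have hc := (Ultrafilter.compl_mem_iff_notMem (s := {n | g i n ≤ f n})).mpr hmem
      refine Filter.mem_of_superset hc ?_
      intro n hn
      simp only [Set.mem_compl_iff, Set.mem_setOf_eq, not_le] at hn
      exact hn.le
    have : f ∈ Yf i := hfY
    refine hf f ⟨Yf i, ⟨i, rfl⟩, this⟩ ?_
    have hemp : {n | f n < f n} = (∅ : Set ℕ) := by ext n; simp
    unfold LeStar
    rw [hemp]
    exact Set.finite_empty
  · intro H
    rw [addNum, ← Order.succ_le_iff]
    refine le_csInf addNum_set_nonempty ?_
    rintro c ⟨Fam, hFam, hdom, rfl⟩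
    rw [Order.succ_le_iff]
    by_contra hle
    push_neg at hle
    have hdom' : DominatingFam (⋃₀ Fam) := not_not.mp hdom
    obtain ⟨q0, ⟨Z0, hZ0, _⟩, _⟩ := hdom' (fun _ => 0)
    haveI : Nonempty Fam := ⟨⟨Z0, hZ0⟩⟩
    have hchoice : ∀ Y : Fam, ∃ (U : Ultrafilter ℕ) (g0 : ℕ → ℕ),
        NonPrincipal U ∧ ∀ f ∈ (Y : Set (ℕ → ℕ)), {n | f n ≤ g0 n} ∈ U :=
      fun Y => hardDfin (hFam Y Y.2)
    choose Uf gf hUf hgf using hchoice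
    rw [← Cardinal.mk_out κ] at hle
    obtain ⟨e⟩ := (Cardinal.le_def _ _).mp hle
    set φ : κ.out → Fam := Function.invFun e with hφ
    have hsurj : Function.Surjective φ := Function.invFun_surjective e.injective
    obtain ⟨g', hg'⟩ := H κ.out (Cardinal.mk_out κ) (fun i => gf (φ i)) (fun i => Uf (φ i))
      (fun i => hUf (φ i))
    obtain ⟨q, ⟨Z', hZ', hqZ'⟩, hles⟩ := hdom' (fun n => g' n + 1)
    set Y : Fam := ⟨Z', hZ'⟩ with hY
    obtain ⟨i, hi⟩ := hsurj Y
    have hgi : {n | gf Y n ≤ g' n} ∈ Uf Y := by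
      have := hg' i
      rw [hi] at this
      exact this
    have hmem2 : ({n | q n ≤ gf Y n} ∩ {n | gf Y n ≤ g' n}) ∈ Uf Y :=
      Filter.inter_mem (hgf Y q hqZ') hgi
    have hinf := hUf Y _ hmem2
    apply hinf
    refine hles.subset ?_
    rintro n ⟨h1, h2⟩
    simp only [Set.mem_setOf_eq] at h1 h2 ⊢
    omega
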